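/- Let y ⊆ ℕ and let (x_n) be a sequence of subsets of ℕ such that for every n the set y ∩ x_0 ∩ ⋯ ∩ x_n contains arbitrarily long arithmetic progressions. Then for every z : ℕ → Bool there is a sequence (i_n) of finite subsets of ℕ such that: (i) each i_n is an arithmetic progression of length at least n + 3 contained in y ∩ x_0 ∩ ⋯ ∩ x_n; (ii) max i_n < min i_{n+1} and i_n ∪ i_{n+1} is not an arithmetic progression; (iii) i_n has even cardinality if and only if z n = true. In particular, x = ⋃_n i_n satisfies x ⊆ y, x ∖ x_n is finite for every n, and x contains arbitrarily long arithmetic progressions. -/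
import Mathlib


/-- `x ⊆ ℕ` contains arbitrarily long (finite) arithmetic progressions. -/
def ContainsAP (x : Set ℕ) : Prop :=
  ∀ k : ℕ, ∃ a, 1 ≤ a ∧ ∃ b, ∀ l < k, a * l + b ∈ x

/-- `s` is an arithmetic progression of length `m` (with common difference `≥ 1`). -/
def IsAPofLength (s : Set ℕ) (m : ℕ) : Prop :=
  ∃ a, 1 ≤ a ∧ ∃ b, s = (fun l => a * l + b) '' {l | l < m}

/-- Given `y` and a sequence `(x_n)` such that each `y ∩ x_0 ∩ ⋯ ∩ x_n` contains
arbitrarily long arithmetic progressions, for any `z : ℕ → Bool` one can find a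
sequence `(i_n)` of finite arithmetic progressions, of length at least `n + 3`,
inside `y ∩ x_0 ∩ ⋯ ∩ x_n`, separated and not merging into longer progressions,
with `|i_n|` even iff `z n = true`; the union is then a pseudointersection of the
`x_n` inside `y` containing arbitrarily long arithmetic progressions. -/
theorem exists_ap_sequence (y : Set ℕ) (x : ℕ → Set ℕ)
    (h : ∀ n : ℕ, ContainsAP (y ∩ ⋂ k ≤ n, x k)) (z : ℕ → Bool) :
    ∃ i : ℕ → Finset ℕ,
      (∀ n : ℕ, ∃ m, n + 3 ≤ m ∧ IsAPofLength (↑(i n)) m ∧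
        (↑(i n) : Set ℕ) ⊆ y ∩ ⋂ k ≤ n, x k) ∧
      (∀ n : ℕ, ∀ p ∈ i n, ∀ q ∈ i (n + 1), p < q) ∧
      (∀ n : ℕ, ¬ ∃ m, IsAPofLength (↑(i n ∪ i (n + 1))) m) ∧
      (∀ n : ℕ, Even (i n).card ↔ z n = true) ∧
      (⋃ n, (i n : Set ℕ)) ⊆ y ∧
      (∀ n : ℕ, ((⋃ m, (i m : Set ℕ)) \ x n).Finite) ∧
      ContainsAP (⋃ n, (i n : Set ℕ)) := by
  classical
  -- choose a length with the right parity
  have hmpar : ∀ n : ℕ, ∃ m, n + 3 ≤ m ∧ (Even m ↔ z n = true) := by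
    intro n
    by_cases he : Even (n + 3)
    · cases hz : z n
      · refine ⟨n + 4, by omega, ?_⟩
        rw [show n + 4 = (n + 3) + 1 from rfl, Nat.even_add_one]
        simp [he]
      · exact ⟨n + 3, le_refl _, by simp [he]⟩
    · cases hz : z n
      · exact ⟨n + 3, le_refl _, by simp [he]⟩
      · refine ⟨n + 4, by omega, ?_⟩
        rw [show n + 4 = (n + 3) + 1 from rfl, Nat.even_add_one]
        simp [he]
  -- the key step lemma: given a bound M, find a suitable AP block
  have key : ∀ n M : ℕ, ∃ t : ℕ × ℕ × ℕ,
      1 ≤ t.1 ∧ n + 3 ≤ t.2.2 ∧ (Even t.2.2 ↔ z n = true) ∧ M < t.2.1 ∧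
      t.2.1 ≠ M + t.1 ∧ ∀ l < t.2.2, t.1 * l + t.2.1 ∈ y ∩ ⋂ k ≤ n, x k := by
    intro n M
    obtain ⟨m, hm3, hmz⟩ := hmpar n
    obtain ⟨a, ha, b0, hb0⟩ := h n (M + 2 + m)
    have hk1 : M + 1 ≤ a * (M + 1) := Nat.le_mul_of_pos_left _ ha
    have hk2 : M + 2 ≤ a * (M + 2) := Nat.le_mul_of_pos_left _ ha
    have hq : a * (M + 2) = a * (M + 1) + a := by ring
    by_cases hc : a * (M + 1) + b0 = M + a
    · refine ⟨⟨a, a * (M + 2) + b0, m⟩, ha, hm3, hmz,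
        show M < a * (M + 2) + b0 by omega,
        show a * (M + 2) + b0 ≠ M + a by omega, ?_⟩
      intro l hl
      show a * l + (a * (M + 2) + b0) ∈ _
      have he : a * l + (a * (M + 2) + b0) = a * (l + (M + 2)) + b0 := by ring
      rw [he]
      exact hb0 _ (by simp only at hl; omega)
    · refine ⟨⟨a, a * (M + 1) + b0, m⟩, ha, hm3, hmz,
        show M < a * (M + 1) + b0 by omega, hc, ?_⟩
      intro l hl
      show a * l + (a * (M + 1) + b0) ∈ _
      have he : a * l + (a * (M + 1) + b0) = a * (l + (M + 1)) + b0 := by ring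
      rw [he]
      exact hb0 _ (by simp only at hl; omega)
  -- recursive construction
  let Mx : ℕ × ℕ × ℕ → ℕ := fun t => t.1 * (t.2.2 - 1) + t.2.1
  let g : ℕ → ℕ × ℕ × ℕ := fun n => Nat.rec (Classical.choose (key 0 0))
      (fun n prev => Classical.choose (key (n + 1) (Mx prev))) n
  have hgs : ∀ n, g (n + 1) = Classical.choose (key (n + 1) (Mx (g n))) := fun n => rfl
  have spec : ∀ n, 1 ≤ (g n).1 ∧ n + 3 ≤ (g n).2.2 ∧ (Even (g n).2.2 ↔ z n = true) ∧
      ∀ l < (g n).2.2, (g n).1 * l + (g n).2.1 ∈ y ∩ ⋂ k ≤ n, x k := by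
    intro n
    cases n with
    | zero =>
      obtain ⟨h1, h2, h3, _, _, h6⟩ := Classical.choose_spec (key 0 0)
      exact ⟨h1, h2, h3, h6⟩
    | succ n =>
      obtain ⟨h1, h2, h3, _, _, h6⟩ := Classical.choose_spec (key (n + 1) (Mx (g n)))
      rw [hgs n]
      exact ⟨h1, h2, h3, h6⟩
  have sep : ∀ n, Mx (g n) < (g (n + 1)).2.1 ∧ (g (n + 1)).2.1 ≠ Mx (g n) + (g (n + 1)).1 := by
    intro n
    obtain ⟨_, _, _, h4, h5, _⟩ := Classical.choose_spec (key (n + 1) (Mx (g n)))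
    rw [hgs n]
    exact ⟨h4, h5⟩
  set i : ℕ → Finset ℕ :=
    fun n => (Finset.range (g n).2.2).image (fun l => (g n).1 * l + (g n).2.1) with hi
  have hmem : ∀ n t, t ∈ i n ↔ ∃ l < (g n).2.2, (g n).1 * l + (g n).2.1 = t := by
    intro n t
    simp [hi]
  have hcoe : ∀ n, (↑(i n) : Set ℕ) =
      (fun l => (g n).1 * l + (g n).2.1) '' {l | l < (g n).2.2} := by
    intro n
    ext t
    simp [hi, Set.mem_image]
  have hub : ∀ n, ∀ t ∈ i n, t ≤ Mx (g n) := by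
    intro n t ht
    obtain ⟨l, hl, rfl⟩ := (hmem n t).mp ht
    have h1 : (g n).1 * l ≤ (g n).1 * ((g n).2.2 - 1) := Nat.mul_le_mul_left _ (by omega)
    simp only [Mx]
    omega
  have hlb : ∀ n, ∀ t ∈ i n, (g n).2.1 ≤ t := by
    intro n t ht
    obtain ⟨l, hl, rfl⟩ := (hmem n t).mp ht
    omega
  have hsub : ∀ n, (↑(i n) : Set ℕ) ⊆ y ∩ ⋂ k ≤ n, x k := by
    intro n t ht
    obtain ⟨l, hl, rfl⟩ := (hmem n t).mp ht
    exact (spec n).2.2.2 l hl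
  refine ⟨i, ?_, ?_, ?_, ?_, ?_, ?_, ?_⟩
  · -- AP of length ≥ n+3 inside the intersection
    intro n
    exact ⟨(g n).2.2, (spec n).2.1, ⟨(g n).1, (spec n).1, (g n).2.1, hcoe n⟩, hsub n⟩
  · -- separation
    intro n p hp q hq
    have h1 := hub n p hp
    have h2 := hlb (n + 1) q hq
    have h3 := (sep n).1
    omega
  · -- non-merging
    rintro n ⟨m, A, hA, B, hs⟩
    have hAm : ∀ u, u ∈ i n ∪ i (n + 1) → ∃ l < m, A * l + B = u := by
      intro u hu
      have : u ∈ (↑(i n ∪ i (n + 1)) : Set ℕ) := hu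
      rw [hs] at this
      obtain ⟨l, hl, hlu⟩ := this
      exact ⟨l, hl, hlu⟩
    have hAm' : ∀ l < m, A * l + B ∈ i n ∪ i (n + 1) := by
      intro l hl
      have : A * l + B ∈ (↑(i n ∪ i (n + 1)) : Set ℕ) := by
        rw [hs]; exact ⟨l, hl, rfl⟩
      exact this
    -- gap lemma
    have gap : ∀ u v, u ∈ i n ∪ i (n + 1) → v ∈ i n ∪ i (n + 1) → u < v →
        (∀ w ∈ i n ∪ i (n + 1), w ≤ u ∨ v ≤ w) → v = u + A := by
      intro u v hu hv huv hbet
      obtain ⟨l1, hl1, rfl⟩ := hAm u hu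
      obtain ⟨l2, hl2, rfl⟩ := hAm v hv
      have hl12 : l1 < l2 := by
        by_contra hcon
        have : A * l2 ≤ A * l1 := Nat.mul_le_mul_left _ (by omega)
        omega
      have heq : l2 = l1 + 1 := by
        by_contra hcon
        have hmid : A * (l1 + 1) + B ∈ i n ∪ i (n + 1) := hAm' _ (by omega)
        have h1 : A * (l1 + 1) = A * l1 + A := by ring
        have h2 : A * (l1 + 2) ≤ A * l2 := Nat.mul_le_mul_left _ (by omega)
        have h3 : A * (l1 + 2) = A * l1 + A + A := by ring
        rcases hbet _ hmid with hle | hle <;> omega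
      subst heq
      have : A * (l1 + 1) = A * l1 + A := by ring
      omega
    -- key points
    have hm3 := (spec n).2.1
    have hm3' := (spec (n + 1)).2.1
    have ha1' : 1 ≤ (g (n + 1)).1 := (spec (n + 1)).1
    have hp : Mx (g n) ∈ i n :=
      (hmem n _).mpr ⟨(g n).2.2 - 1, by omega, rfl⟩
    have hq : (g (n + 1)).2.1 ∈ i (n + 1) :=
      (hmem (n + 1) _).mpr ⟨0, by omega, by simp⟩
    have hq' : (g (n + 1)).1 + (g (n + 1)).2.1 ∈ i (n + 1) :=
      (hmem (n + 1) _).mpr ⟨1, by omega, by ring⟩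
    have hpu : Mx (g n) ∈ i n ∪ i (n + 1) := Finset.mem_union_left _ hp
    have hqu : (g (n + 1)).2.1 ∈ i n ∪ i (n + 1) := Finset.mem_union_right _ hq
    have hq'u : (g (n + 1)).1 + (g (n + 1)).2.1 ∈ i n ∪ i (n + 1) :=
      Finset.mem_union_right _ hq'
    have hMb := (sep n).1
    have hgap1 : (g (n + 1)).2.1 = Mx (g n) + A := by
      apply gap _ _ hpu hqu hMb
      intro w hw
      rcases Finset.mem_union.mp hw with hw | hw
      · exact Or.inl (hub n w hw)
      · exact Or.inr (hlb (n + 1) w hw)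
    have hgap2 : (g (n + 1)).1 + (g (n + 1)).2.1 = (g (n + 1)).2.1 + A := by
      apply gap _ _ hqu hq'u (by omega)
      intro w hw
      rcases Finset.mem_union.mp hw with hw | hw
      · have := hub n w hw
        exact Or.inl (by omega)
      · obtain ⟨l, hl, rfl⟩ := (hmem (n + 1) w).mp hw
        rcases Nat.eq_zero_or_pos l with rfl | hlpos
        · exact Or.inl (by simp)
        · have h1 : (g (n + 1)).1 * 1 ≤ (g (n + 1)).1 * l := Nat.mul_le_mul_left _ hlpos
          have h2 : (g (n + 1)).1 * 1 = (g (n + 1)).1 := mul_one _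
          exact Or.inr (by omega)
    exact (sep n).2 (by omega)
  · -- parity of the cardinality
    intro n
    have hinj : Function.Injective (fun l => (g n).1 * l + (g n).2.1) := by
      intro l1 l2 hl
      simp only at hl
      have : (g n).1 * l1 = (g n).1 * l2 := by omega
      exact Nat.eq_of_mul_eq_mul_left (by have := (spec n).1; omega) this
    have : (i n).card = (g n).2.2 := by
      rw [hi]
      rw [Finset.card_image_of_injective _ hinj, Finset.card_range]
    rw [this]
    exact (spec n).2.2.1
  · -- union contained in y
    intro t ht
    obtain ⟨s, ⟨n, rfl⟩, hts⟩ := ht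
    exact (hsub n hts).1
  · -- pseudointersection
    intro n
    have hss : ((⋃ m, (i m : Set ℕ)) \ x n) ⊆ ⋃ m ∈ Finset.range n, (i m : Set ℕ) := by
      rintro t ⟨ht, htx⟩
      obtain ⟨s, ⟨k, rfl⟩, hts⟩ := ht
      rcases lt_or_ge k n with hkn | hkn
      · exact Set.mem_biUnion (Finset.mem_range.mpr hkn) hts
      · exfalso
        apply htx
        have := (hsub k hts).2
        simp only [Set.mem_iInter] at this
        exact this n hkn
    exact Set.Finite.subset
      (Set.Finite.biUnion (Finset.range n).finite_toSet (fun m _ => (i m).finite_toSet)) hss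
  · -- contains arbitrarily long APs
    intro k
    refine ⟨(g k).1, (spec k).1, (g k).2.1, fun l hl => ?_⟩
    apply Set.mem_iUnion.mpr ⟨k, ?_⟩
    have : l < (g k).2.2 := by have := (spec k).2.1; omega
    exact (hmem k _).mpr ⟨l, this, rfl⟩
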